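/- arXiv:2312.07502 — 4 statements merged into one kernel-verified Lean document; each statement's English description precedes it below -/
import Mathlib

section
/- The limit as x tends to infinity of γ(x+1, x)/Γ(x+1) equals 1/2, where γ(a,x) = ∫₀ˣ e^{-t} t^{a-1} dt is the lower incomplete gamma function and Γ is the gamma function. -/
open Real Filter MeasureTheory Set Topology


lemma deriv_aux1 {u : ℝ} (hu : u ∈ Ioi (-1:ℝ)) :
    HasDerivAt (fun u : ℝ => Real.log (1+u) - u + u^2/2) (u^2/(1+u)) u := by
  have h1 : (0:ℝ) < 1 + u := by linarith [mem_Ioi.mp hu]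
  have := ((Real.hasDerivAt_log h1.ne').comp u ((hasDerivAt_id u).const_add 1))
  have h2 := (this.sub (hasDerivAt_id u)).add ((hasDerivAt_pow 2 u).div_const 2)
  refine h2.congr_deriv ?_
  field_simp; ring

lemma deriv_aux2 {u : ℝ} (hu : u ∈ Ioi (-1:ℝ)) :
    HasDerivAt (fun u : ℝ => Real.log (1+u) - u + u^2/(2*(1+u))) (-(u^2/((1+u)^2*2))) u := by
  have h1 : (0:ℝ) < 1 + u := by linarith [mem_Ioi.mp hu]
  have hl := ((Real.hasDerivAt_log h1.ne').comp u ((hasDerivAt_id u).const_add 1))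
  have hd : HasDerivAt (fun u : ℝ => u^2/(2*(1+u))) ((2*u*(2*(1+u)) - u^2*2)/(2*(1+u))^2) u := by
    have hden : HasDerivAt (fun u : ℝ => 2*(1+u)) 2 u := by
      simpa using (((hasDerivAt_id u).const_add 1).const_mul 2)
    have h3 := HasDerivAt.div (hasDerivAt_pow 2 u) hden (by positivity : (2:ℝ)*(1+u) ≠ 0)
    refine h3.congr_deriv ?_
    push_cast
    ring
  have h2 := (hl.sub (hasDerivAt_id u)).add hd
  refine h2.congr_deriv ?_
  field_simp; ring

lemma psi_mono : MonotoneOn (fun u : ℝ => Real.log (1+u) - u + u^2/2) (Ioi (-1)) := by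
  have hd : DifferentiableOn ℝ (fun u : ℝ => Real.log (1+u) - u + u^2/2) (Ioi (-1)) :=
    fun u hu => (deriv_aux1 hu).differentiableAt.differentiableWithinAt
  refine monotoneOn_of_deriv_nonneg (convex_Ioi _) hd.continuousOn
    (by rwa [interior_Ioi]) ?_
  intro u hu
  rw [interior_Ioi] at hu
  rw [(deriv_aux1 hu).deriv]
  have h1 : (0:ℝ) < 1 + u := by linarith [mem_Ioi.mp hu]
  positivity

lemma chi_anti : AntitoneOn (fun u : ℝ => Real.log (1+u) - u + u^2/(2*(1+u))) (Ioi (-1)) := by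
  have hd : DifferentiableOn ℝ (fun u : ℝ => Real.log (1+u) - u + u^2/(2*(1+u))) (Ioi (-1)) :=
    fun u hu => (deriv_aux2 hu).differentiableAt.differentiableWithinAt
  refine antitoneOn_of_deriv_nonpos (convex_Ioi _) hd.continuousOn
    (by rwa [interior_Ioi]) ?_
  intro u hu
  rw [interior_Ioi] at hu
  rw [(deriv_aux2 hu).deriv]
  have h1 : (0:ℝ) < 1 + u := by linarith [mem_Ioi.mp hu]
  have : (0:ℝ) ≤ u^2/((1+u)^2*2) := by positivity
  linarith


lemma psi_zero : Real.log (1+(0:ℝ)) - 0 + (0:ℝ)^2/2 = 0 := by norm_num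
lemma chi_zero : Real.log (1+(0:ℝ)) - 0 + (0:ℝ)^2/(2*(1+0)) = 0 := by norm_num

-- bounds: for -1 < u
lemma psi_le {u : ℝ} (h1 : -1 < u) (h0 : u ≤ 0) : Real.log (1+u) - u ≤ -u^2/2 := by
  have := psi_mono (mem_Ioi.mpr h1) (mem_Ioi.mpr (by norm_num : (-1:ℝ) < 0)) h0
  norm_num at this
  nlinarith [this]

lemma psi_ge {u : ℝ} (h0 : 0 ≤ u) : -u^2/2 ≤ Real.log (1+u) - u := by
  have := psi_mono (mem_Ioi.mpr (by norm_num : (-1:ℝ) < 0)) (mem_Ioi.mpr (by linarith : (-1:ℝ) < u)) h0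
  norm_num at this
  nlinarith [this]

lemma chi_ge {u : ℝ} (h1 : -1 < u) (h0 : u ≤ 0) : -u^2/(2*(1+u)) ≤ Real.log (1+u) - u := by
  have := chi_anti (mem_Ioi.mpr h1) (mem_Ioi.mpr (by norm_num : (-1:ℝ) < 0)) h0
  norm_num at this
  rw [neg_div]
  linarith

lemma chi_le {u : ℝ} (h0 : 0 ≤ u) : Real.log (1+u) - u ≤ -u^2/(2*(1+u)) := by
  have := chi_anti (mem_Ioi.mpr (by norm_num : (-1:ℝ) < 0)) (mem_Ioi.mpr (by linarith : (-1:ℝ) < u)) h0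
  norm_num at this
  rw [neg_div]
  linarith

noncomputable def gg (x s : ℝ) : ℝ := Real.exp (x * Real.log (1 + s / Real.sqrt x) - s * Real.sqrt x)

lemma gg_rw {x : ℝ} (hx : 0 < x) (s : ℝ) :
    x * Real.log (1 + s / Real.sqrt x) - s * Real.sqrt x
      = x * (Real.log (1 + s / Real.sqrt x) - s / Real.sqrt x) := by
  have h : x * (s / Real.sqrt x) = s * Real.sqrt x := by
    rw [mul_div_assoc', mul_comm x s, mul_div_assoc, Real.div_sqrt]
  rw [mul_sub, h]

lemma xu_sq {x s : ℝ} (hx : 0 < x) : x * (s / Real.sqrt x)^2 = s^2 := by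
  rw [div_pow, Real.sq_sqrt hx.le]
  field_simp

lemma gg_tendsto (s : ℝ) :
    Tendsto (fun x => gg x s) atTop (𝓝 (Real.exp (-s^2/2))) := by
  have hsqrt : Tendsto Real.sqrt atTop atTop := by
    have := tendsto_rpow_atTop (by norm_num : (0:ℝ) < 1/2)
    exact this.congr fun x => (Real.sqrt_eq_rpow x).symm
  have hu : Tendsto (fun x => s / Real.sqrt x) atTop (𝓝 0) := by
    simpa [div_eq_mul_inv] using (hsqrt.inv_tendsto_atTop).const_mul s
  have hL : Tendsto (fun x => -s^2/(2*(1 + s / Real.sqrt x))) atTop (𝓝 (-s^2/2)) := by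
    have := (tendsto_const_nhds (x := (-s^2 : ℝ))).div
      (((hu.const_add 1).const_mul 2)) (by norm_num)
    simpa [Pi.div_def] using this
  have hev : ∀ᶠ x in atTop, -Real.sqrt x < s ∧ (0:ℝ) < x := by
    filter_upwards [hsqrt.eventually_gt_atTop (-s), eventually_gt_atTop 0] with x h1 h2
    exact ⟨by linarith, h2⟩
  have hinner : Tendsto (fun x => x * Real.log (1 + s / Real.sqrt x) - s * Real.sqrt x)
      atTop (𝓝 (-s^2/2)) := by
    rcases le_or_gt s 0 with hs | hs
    · refine tendsto_of_tendsto_of_tendsto_of_le_of_le' hL tendsto_const_nhds ?_ ?_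
      · filter_upwards [hev] with x ⟨h1, hx⟩
        have hsx : (0:ℝ) < Real.sqrt x := Real.sqrt_pos.mpr hx
        have hu1 : -1 < s / Real.sqrt x := by
          rw [neg_lt, ← neg_div]
          exact (div_lt_one hsx).mpr (by linarith)
        have hu0 : s / Real.sqrt x ≤ 0 := div_nonpos_of_nonpos_of_nonneg hs hsx.le
        have := chi_ge hu1 hu0
        rw [gg_rw hx]
        calc -s^2/(2*(1 + s / Real.sqrt x)) = x * (-(s / Real.sqrt x)^2/(2*(1 + s / Real.sqrt x))) := by
              have h3 : x * (s / Real.sqrt x)^2 = s^2 := xu_sq hx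
              first
              | rw [mul_div_assoc', mul_neg, h3]
              | rw [eq_comm, mul_div_assoc', mul_neg, h3]
          _ ≤ x * (Real.log (1 + s / Real.sqrt x) - s / Real.sqrt x) := by
              apply mul_le_mul_of_nonneg_left _ hx.le
              simpa [neg_div] using this
      · filter_upwards [hev] with x ⟨h1, hx⟩
        have hsx : (0:ℝ) < Real.sqrt x := Real.sqrt_pos.mpr hx
        have hu1 : -1 < s / Real.sqrt x := by
          rw [neg_lt, ← neg_div]
          exact (div_lt_one hsx).mpr (by linarith)
        have hu0 : s / Real.sqrt x ≤ 0 := div_nonpos_of_nonpos_of_nonneg hs hsx.le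
        have := psi_le hu1 hu0
        rw [gg_rw hx]
        calc x * (Real.log (1 + s / Real.sqrt x) - s / Real.sqrt x)
            ≤ x * (-(s / Real.sqrt x)^2/2) := by
              apply mul_le_mul_of_nonneg_left _ hx.le
              simpa [neg_div] using this
          _ = -s^2/2 := by
              have h3 : x * (s / Real.sqrt x)^2 = s^2 := xu_sq hx
              first
              | rw [mul_div_assoc', mul_neg, h3]
              | rw [eq_comm, mul_div_assoc', mul_neg, h3]
    · refine tendsto_of_tendsto_of_tendsto_of_le_of_le' tendsto_const_nhds hL ?_ ?_
      · filter_upwards [hev] with x ⟨h1, hx⟩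
        have hsx : (0:ℝ) < Real.sqrt x := Real.sqrt_pos.mpr hx
        have hu0 : 0 ≤ s / Real.sqrt x := div_nonneg hs.le hsx.le
        have := psi_ge hu0
        rw [gg_rw hx]
        calc -s^2/2 = x * (-(s / Real.sqrt x)^2/2) := by
              have h3 : x * (s / Real.sqrt x)^2 = s^2 := xu_sq hx
              first
              | rw [mul_div_assoc', mul_neg, h3]
              | rw [eq_comm, mul_div_assoc', mul_neg, h3]
          _ ≤ x * (Real.log (1 + s / Real.sqrt x) - s / Real.sqrt x) := by
              apply mul_le_mul_of_nonneg_left _ hx.le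
              simpa [neg_div] using this
      · filter_upwards [hev] with x ⟨h1, hx⟩
        have hsx : (0:ℝ) < Real.sqrt x := Real.sqrt_pos.mpr hx
        have hu0 : 0 ≤ s / Real.sqrt x := div_nonneg hs.le hsx.le
        have := chi_le hu0
        rw [gg_rw hx]
        calc x * (Real.log (1 + s / Real.sqrt x) - s / Real.sqrt x)
            ≤ x * (-(s / Real.sqrt x)^2/(2*(1 + s / Real.sqrt x))) := by
              apply mul_le_mul_of_nonneg_left _ hx.le
              simpa [neg_div] using this
          _ = -s^2/(2*(1 + s / Real.sqrt x)) := by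
              have h3 : x * (s / Real.sqrt x)^2 = s^2 := xu_sq hx
              first
              | rw [mul_div_assoc', mul_neg, h3]
              | rw [eq_comm, mul_div_assoc', mul_neg, h3]
  exact (Real.continuous_exp.tendsto _).comp hinner


noncomputable def bb (s : ℝ) : ℝ := if 0 < s then Real.exp ((1-s)/2) else Real.exp (-s^2/2)

lemma gg_meas (x : ℝ) : Measurable (gg x) := by
  unfold gg
  exact Real.measurable_exp.comp (((measurable_const.mul (Real.measurable_log.comp
    (measurable_const.add (measurable_id.div_const _)))).sub (measurable_id.mul_const _)))

lemma bb_pos (s : ℝ) : 0 < bb s := by unfold bb; split <;> positivity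

lemma gg_bound_neg {x s : ℝ} (hx : 0 < x) (h1 : -Real.sqrt x < s) (h0 : s ≤ 0) :
    gg x s ≤ Real.exp (-s^2/2) := by
  have hsx : (0:ℝ) < Real.sqrt x := Real.sqrt_pos.mpr hx
  have hu1 : -1 < s / Real.sqrt x := by
    rw [neg_lt, ← neg_div]
    exact (div_lt_one hsx).mpr (by linarith)
  have hu0 : s / Real.sqrt x ≤ 0 := div_nonpos_of_nonpos_of_nonneg h0 hsx.le
  have h := psi_le hu1 hu0
  apply Real.exp_le_exp.mpr
  rw [gg_rw hx]
  calc x * (Real.log (1 + s / Real.sqrt x) - s / Real.sqrt x)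
      ≤ x * (-(s / Real.sqrt x)^2/2) := by
        apply mul_le_mul_of_nonneg_left _ hx.le
        simpa [neg_div] using h
    _ = -s^2/2 := by rw [mul_div_assoc', mul_neg, xu_sq hx]

lemma gg_bound_pos {x s : ℝ} (hx : 1 ≤ x) (h0 : 0 ≤ s) :
    gg x s ≤ Real.exp ((1-s)/2) := by
  have hx0 : (0:ℝ) < x := by linarith
  have hsx : (1:ℝ) ≤ Real.sqrt x := by
    rw [show (1:ℝ) = Real.sqrt 1 by simp]
    exact Real.sqrt_le_sqrt hx
  have hu0 : 0 ≤ s / Real.sqrt x := div_nonneg h0 (by linarith)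
  have h := chi_le hu0
  apply Real.exp_le_exp.mpr
  rw [gg_rw hx0]
  have hule : s / Real.sqrt x ≤ s := by
    rw [div_le_iff₀ (by linarith)]
    nlinarith
  calc x * (Real.log (1 + s / Real.sqrt x) - s / Real.sqrt x)
      ≤ x * (-(s / Real.sqrt x)^2/(2*(1 + s / Real.sqrt x))) := by
        apply mul_le_mul_of_nonneg_left _ hx0.le
        simpa [neg_div] using h
    _ = -s^2/(2*(1 + s / Real.sqrt x)) := by rw [mul_div_assoc', mul_neg, xu_sq hx0]
    _ ≤ -s^2/(2*(1 + s)) := by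
        rw [div_le_div_iff₀ (by positivity) (by positivity)]
        nlinarith [sq_nonneg s, hule]
    _ ≤ (1-s)/2 := by
        rw [div_le_div_iff₀ (by positivity) (by norm_num)]
        nlinarith

lemma bb_integrable : Integrable bb := by
  rw [← integrableOn_univ, ← Iic_union_Ioi (a := (0:ℝ)), integrableOn_union]
  constructor
  · refine IntegrableOn.congr_fun
      ((integrable_exp_neg_mul_sq (by norm_num : (0:ℝ) < 1/2)).integrableOn)
      (fun s hs => ?_) measurableSet_Iic
    simp only [bb, if_neg (not_lt.mpr (mem_Iic.mp hs))]
    congr 1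
    ring
  · refine IntegrableOn.congr_fun
      (((exp_neg_integrableOn_Ioi 0 (by norm_num : (0:ℝ) < 1/2)).const_mul (Real.exp (1/2))))
      (fun s hs => ?_) measurableSet_Ioi
    simp only [bb, if_pos (mem_Ioi.mp hs)]
    rw [← Real.exp_add]
    congr 1
    ring


lemma sqrt_tendsto : Tendsto Real.sqrt atTop atTop := by
  have := tendsto_rpow_atTop (by norm_num : (0:ℝ) < 1/2)
  exact this.congr fun x => (Real.sqrt_eq_rpow x).symm

lemma gauss_eq (s : ℝ) : Real.exp (-s^2/2) = Real.exp (-(1/2) * s^2) := by congr 1; ring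

lemma NN_tendsto :
    Tendsto (fun x => ∫ s in Ioc (-Real.sqrt x) 0, gg x s) atTop (𝓝 (Real.sqrt (2*π)/2)) := by
  have hval : (∫ s, indicator (Iic 0) (fun s : ℝ => Real.exp (-s^2/2)) s) = Real.sqrt (2*π)/2 := by
    rw [integral_indicator measurableSet_Iic]
    have h1 : (∫ s in Iic (0:ℝ), Real.exp (-s^2/2))
        = ∫ s in Ioi (0:ℝ), Real.exp (-s^2/2) := by
      rw [show (0:ℝ) = -0 by norm_num, ← integral_comp_neg_Ioi]
      norm_num
    rw [h1]
    simp_rw [gauss_eq]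
    rw [integral_gaussian_Ioi]
    rw [show π/(1/2:ℝ) = 2*π by ring]
  rw [← hval]
  have hrw : ∀ x : ℝ, (∫ s in Ioc (-Real.sqrt x) 0, gg x s)
      = ∫ s, indicator (Ioc (-Real.sqrt x) 0) (gg x) s :=
    fun x => (integral_indicator measurableSet_Ioc).symm
  simp_rw [hrw]
  apply tendsto_integral_filter_of_dominated_convergence bb
  · exact Eventually.of_forall fun x =>
      ((gg_meas x).indicator measurableSet_Ioc).aestronglyMeasurable
  · filter_upwards [eventually_ge_atTop (1:ℝ)] with x hx
    apply ae_of_all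
    intro s
    by_cases hs : s ∈ Ioc (-Real.sqrt x) 0
    · rw [indicator_of_mem hs, Real.norm_eq_abs, abs_of_pos (show (0:ℝ) < gg x s from Real.exp_pos _)]
      calc gg x s ≤ Real.exp (-s^2/2) := gg_bound_neg (by linarith) hs.1 hs.2
        _ = bb s := by rw [bb, if_neg (not_lt.mpr hs.2)]
    · rw [indicator_of_notMem hs, norm_zero]
      exact (bb_pos s).le
  · exact bb_integrable
  · apply ae_of_all
    intro s
    rcases le_or_gt s 0 with hs | hs
    · rw [indicator_of_mem (mem_Iic.mpr hs)]
      apply (gg_tendsto s).congr'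
      filter_upwards [sqrt_tendsto.eventually_gt_atTop (-s)] with x h1
      rw [indicator_of_mem (mem_Ioc.mpr ⟨by linarith, hs⟩)]
    · rw [indicator_of_notMem (by simpa using hs)]
      apply tendsto_const_nhds.congr
      intro x
      rw [indicator_of_notMem (fun h => absurd h.2 (not_le.mpr hs))]

lemma GG_tendsto :
    Tendsto (fun x => ∫ s in Ioi (-Real.sqrt x), gg x s) atTop (𝓝 (Real.sqrt (2*π))) := by
  have hval : (∫ s : ℝ, Real.exp (-s^2/2)) = Real.sqrt (2*π) := by
    simp_rw [gauss_eq]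
    rw [integral_gaussian]
    rw [show π/(1/2:ℝ) = 2*π by ring]
  rw [← hval]
  have hrw : ∀ x : ℝ, (∫ s in Ioi (-Real.sqrt x), gg x s)
      = ∫ s, indicator (Ioi (-Real.sqrt x)) (gg x) s :=
    fun x => (integral_indicator measurableSet_Ioi).symm
  simp_rw [hrw]
  apply tendsto_integral_filter_of_dominated_convergence bb
  · exact Eventually.of_forall fun x =>
      ((gg_meas x).indicator measurableSet_Ioi).aestronglyMeasurable
  · filter_upwards [eventually_ge_atTop (1:ℝ)] with x hx
    apply ae_of_all
    intro s
    by_cases hs : s ∈ Ioi (-Real.sqrt x)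
    · rw [indicator_of_mem hs, Real.norm_eq_abs, abs_of_pos (show (0:ℝ) < gg x s from Real.exp_pos _)]
      rcases le_or_gt s 0 with h0 | h0
      · calc gg x s ≤ Real.exp (-s^2/2) := gg_bound_neg (by linarith) hs h0
          _ = bb s := by rw [bb, if_neg (not_lt.mpr h0)]
      · calc gg x s ≤ Real.exp ((1-s)/2) := gg_bound_pos hx h0.le
          _ = bb s := by rw [bb, if_pos h0]
    · rw [indicator_of_notMem hs, norm_zero]
      exact (bb_pos s).le
  · exact bb_integrable
  · apply ae_of_all
    intro s
    apply (gg_tendsto s).congr'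
    filter_upwards [sqrt_tendsto.eventually_gt_atTop (-s)] with x h1
    rw [indicator_of_mem (mem_Ioi.mpr (by linarith))]


lemma integral_Ioi_add (f : ℝ → ℝ) (b d : ℝ) :
    (∫ y in Ioi b, f (y + d)) = ∫ t in Ioi (b+d), f t := by
  rw [← integral_indicator measurableSet_Ioi, ← integral_indicator measurableSet_Ioi,
      ← integral_add_right_eq_self (fun t => indicator (Ioi (b+d)) f t) d]
  congr 1
  ext y
  simp only [indicator_apply, mem_Ioi, add_lt_add_iff_right]

lemma sub_Ioi (f : ℝ → ℝ) {c : ℝ} (hc : 0 < c) (a d : ℝ) :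
    (∫ t in Ioi (c*a+d), f t) = c * ∫ s in Ioi a, f (c*s+d) := by
  have h1 := integral_comp_mul_left_Ioi (fun y => f (y+d)) a hc
  rw [h1, smul_eq_mul, integral_Ioi_add, ← mul_assoc, mul_inv_cancel₀ hc.ne', one_mul]

lemma pointwise_eq {x s : ℝ} (hx : 0 < x) (hs : -Real.sqrt x < s) :
    Real.exp (x * Real.log (Real.sqrt x * s + x) - (Real.sqrt x * s + x))
      = Real.exp (x * Real.log x - x) * gg x s := by
  have hle : (0:ℝ) ≤ x := hx.le
  have hsx : (0:ℝ) < Real.sqrt x := Real.sqrt_pos.mpr hx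
  have harg : Real.sqrt x * s + x = x * (1 + s / Real.sqrt x) := by
    field_simp
    linear_combination s * (Real.mul_self_sqrt hle)
  have hpos : (0:ℝ) < 1 + s / Real.sqrt x := by
    rw [neg_lt] at hs
    have := (div_lt_one hsx).mpr (by linarith : -s < Real.sqrt x)
    rw [neg_div] at this
    linarith
  have hlog : x * Real.log (Real.sqrt x * s + x)
      = x * (Real.log x + Real.log (1 + s / Real.sqrt x)) := by
    rw [harg, Real.log_mul hx.ne' hpos.ne']
  unfold gg
  rw [← Real.exp_add]
  congr 1
  rw [hlog]
  ring

lemma numerator_eq {x : ℝ} (hx : 0 < x) :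
    (∫ t in (0:ℝ)..x, Real.exp (-t) * t ^ x)
      = (Real.sqrt x * Real.exp (x * Real.log x - x)) * ∫ s in Ioc (-Real.sqrt x) 0, gg x s := by
  have hle : (0:ℝ) ≤ x := hx.le
  have hsx : (0:ℝ) < Real.sqrt x := Real.sqrt_pos.mpr hx
  have e1 : (∫ t in (0:ℝ)..x, Real.exp (-t) * t ^ x)
      = ∫ t in (0:ℝ)..x, Real.exp (x * Real.log t - t) := by
    rw [intervalIntegral.integral_of_le hle, intervalIntegral.integral_of_le hle]
    refine setIntegral_congr_fun measurableSet_Ioc (fun t ht => ?_)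
    rw [Real.rpow_def_of_pos ht.1, ← Real.exp_add]
    congr 1
    ring
  have e3 := intervalIntegral.integral_comp_mul_add
    (f := fun t => Real.exp (x * Real.log t - t)) (a := -Real.sqrt x) (b := 0) hsx.ne' x
  have hb : Real.sqrt x * -Real.sqrt x + x = 0 := by
    rw [mul_neg, Real.mul_self_sqrt hle]; ring
  have hb2 : Real.sqrt x * 0 + x = x := by ring
  rw [hb, hb2] at e3
  have e4 : (∫ t in (0:ℝ)..x, Real.exp (x * Real.log t - t))
      = Real.sqrt x * ∫ s in -Real.sqrt x..(0:ℝ),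
          Real.exp (x * Real.log (Real.sqrt x * s + x) - (Real.sqrt x * s + x)) := by
    rw [e3, smul_eq_mul, ← mul_assoc, mul_inv_cancel₀ hsx.ne', one_mul]
  rw [e1, e4, intervalIntegral.integral_of_le (by linarith : -Real.sqrt x ≤ 0)]
  have e5 : (∫ s in Ioc (-Real.sqrt x) 0,
        Real.exp (x * Real.log (Real.sqrt x * s + x) - (Real.sqrt x * s + x)))
      = ∫ s in Ioc (-Real.sqrt x) 0, Real.exp (x * Real.log x - x) * gg x s := by
    refine setIntegral_congr_fun measurableSet_Ioc (fun s hs => ?_)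
    exact pointwise_eq hx hs.1
  rw [e5, integral_const_mul, ← mul_assoc]

lemma denominator_eq {x : ℝ} (hx : 0 < x) :
    Real.Gamma (x+1)
      = (Real.sqrt x * Real.exp (x * Real.log x - x)) * ∫ s in Ioi (-Real.sqrt x), gg x s := by
  have hle : (0:ℝ) ≤ x := hx.le
  have hsx : (0:ℝ) < Real.sqrt x := Real.sqrt_pos.mpr hx
  rw [Real.Gamma_eq_integral (by linarith : (0:ℝ) < x+1)]
  simp only [add_sub_cancel_right]
  have e1 : (∫ t in Ioi (0:ℝ), Real.exp (-t) * t ^ x)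
      = ∫ t in Ioi (0:ℝ), Real.exp (x * Real.log t - t) := by
    refine setIntegral_congr_fun measurableSet_Ioi (fun t ht => ?_)
    rw [Real.rpow_def_of_pos (mem_Ioi.mp ht), ← Real.exp_add]
    congr 1
    ring
  have hb : Real.sqrt x * -Real.sqrt x + x = 0 := by
    rw [mul_neg, Real.mul_self_sqrt hle]; ring
  have e2 := sub_Ioi (fun t => Real.exp (x * Real.log t - t)) hsx (-Real.sqrt x) x
  rw [hb] at e2
  rw [e1, e2]
  have e3 : (∫ s in Ioi (-Real.sqrt x),
        Real.exp (x * Real.log (Real.sqrt x * s + x) - (Real.sqrt x * s + x)))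
      = ∫ s in Ioi (-Real.sqrt x), Real.exp (x * Real.log x - x) * gg x s := by
    refine setIntegral_congr_fun measurableSet_Ioi (fun s hs => ?_)
    exact pointwise_eq hx (mem_Ioi.mp hs)
  rw [e3, integral_const_mul, ← mul_assoc]

/-- lim_{x→∞} γ(x+1, x)/Γ(x+1) = 1/2, where γ(a,x)=∫₀ˣ e^{-t} t^{a-1} dt. -/
theorem stmt_0 :
    Tendsto (fun x : ℝ =>
      (∫ t in (0:ℝ)..x, Real.exp (-t) * t ^ ((x + 1) - 1)) / Real.Gamma (x + 1))
      atTop (nhds (1/2)) := by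
  have hne : Real.sqrt (2*π) ≠ 0 := (Real.sqrt_pos.mpr (by positivity)).ne'
  have hlim := NN_tendsto.div GG_tendsto hne
  have hval : Real.sqrt (2*π)/2/Real.sqrt (2*π) = 1/2 := by
    field_simp
  rw [hval] at hlim
  apply Tendsto.congr' _ hlim
  filter_upwards [eventually_ge_atTop (1:ℝ)] with x hx
  have hx0 : (0:ℝ) < x := by linarith
  have hC : Real.sqrt x * Real.exp (x * Real.log x - x) ≠ 0 := by positivity
  simp only [add_sub_cancel_right]
  rw [numerator_eq hx0, denominator_eq hx0, mul_div_mul_left _ _ hC]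
  rfl
end

section
/- For all x ≥ 1 and u ≥ 0, (1 + u/√x)^x · e^{-√x·u} ≤ e^{-u²/(2(u+1))}. -/
lemma log_le_aux (t : ℝ) (ht : 0 ≤ t) :
    Real.log (1 + t) ≤ t - t ^ 2 / (2 * (t + 1)) := by
  have hy : (0:ℝ) < 1 + t := by linarith
  have hw : 0 ≤ Real.log (1 + t) := Real.log_nonneg (by linarith)
  have hsinh : Real.log (1 + t) ≤ Real.sinh (Real.log (1 + t)) :=
    Real.self_le_sinh_iff.mpr hw
  rw [Real.sinh_eq, Real.exp_log hy, Real.exp_neg, Real.exp_log hy] at hsinh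
  have heq : ((1 + t) - (1 + t)⁻¹) / 2 = t - t ^ 2 / (2 * (t + 1)) := by
    field_simp
    ring
  linarith [heq ▸ hsinh]

/-- For x ≥ 1 and u ≥ 0, (1+u/√x)^x e^{-√x u} ≤ e^{-u²/(2(u+1))}. -/
theorem stmt_2 (x u : ℝ) (hx : 1 ≤ x) (hu : 0 ≤ u) :
    (1 + u / Real.sqrt x) ^ x * Real.exp (-(Real.sqrt x * u)) ≤
      Real.exp (-(u ^ 2 / (2 * (u + 1)))) := by
  set s := Real.sqrt x with hs
  have hs1 : 1 ≤ s := by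
    rw [hs]
    exact Real.one_le_sqrt.mpr hx
  have hs0 : (0:ℝ) < s := lt_of_lt_of_le one_pos hs1
  have hx2 : s * s = x := Real.mul_self_sqrt (by linarith)
  set t := u / s with ht
  have ht0 : 0 ≤ t := div_nonneg hu hs0.le
  have h1t : (0:ℝ) < 1 + t := by linarith
  rw [Real.rpow_def_of_pos h1t, ← Real.exp_add, Real.exp_le_exp]
  have hlog := log_le_aux t ht0
  have hx0 : (0:ℝ) < x := by linarith
  have hmul : x * (t - t ^ 2 / (2 * (t + 1))) = s * u - u ^ 2 / (2 * (t + 1)) := by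
    rw [ht, ← hx2]
    field_simp
  have key : Real.log (1 + t) * x ≤ s * u - u ^ 2 / (2 * (t + 1)) := by
    rw [← hmul, mul_comm]
    exact mul_le_mul_of_nonneg_left hlog hx0.le
  have htu : t ≤ u := div_le_self hu hs1
  have hdiv : u ^ 2 / (2 * (u + 1)) ≤ u ^ 2 / (2 * (t + 1)) := by
    gcongr
  linarith
end

section
/- Let v > 0, d ≥ 1, α > d/2 + 1, β > 0 with β² bounded. Then there exist constants 0 < c ≤ C (independent of α, β) such that c · (Γ(α - d/2)/Γ(α)) β^d ≤ (1+‖λ‖²)^{v+d/2} m_{CH}^{α,β}(λ) ≤ C · Γ(α+v)/(Γ(α) β^{2v}) for all λ ∈ ℝ^d, where m_{CH}^{α,β}(λ) = (σ²(4v)^v β^{-2v}/(π^{d/2}Γ(α))) ∫₀^∞ (4vhβ^{-2}+‖λ‖²)^{-(v+d/2)} h^{v+α-1} e^{-h} dh is the spectral density of the Confluent Hypergeometric covariance. -/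
open Real MeasureTheory Set

lemma tail_shift' (s : ℝ) :
    (∫ h in Set.Ioi (1:ℝ), Real.exp (-h) * h ^ (s-1)) =
      ∫ u in Set.Ioi (0:ℝ), Real.exp (-(u+1)) * (u+1) ^ (s-1) := by
  have key : ∀ x : ℝ, (Set.Ioi (1:ℝ)).indicator (fun h => Real.exp (-h) * h ^ (s-1)) (x+1)
      = (Set.Ioi (0:ℝ)).indicator (fun u => Real.exp (-(u+1)) * (u+1) ^ (s-1)) x := by
    intro x
    by_cases hx : x ∈ Set.Ioi (0:ℝ)
    · rw [Set.indicator_of_mem hx, Set.indicator_of_mem (by simpa using hx)]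
    · rw [Set.indicator_of_notMem hx, Set.indicator_of_notMem (by simpa using hx)]
  rw [← integral_indicator measurableSet_Ioi, ← integral_indicator measurableSet_Ioi,
    ← integral_add_right_eq_self ((Set.Ioi (1:ℝ)).indicator (fun h => Real.exp (-h) * h ^ (s-1))) 1]
  simp_rw [key]

lemma shift_integrable' (s : ℝ) (hs : 0 < s) :
    IntegrableOn (fun u => Real.exp (-(u+1)) * (u+1) ^ (s-1)) (Set.Ioi (0:ℝ)) := by
  have h1 : IntegrableOn (fun h => Real.exp (-h) * h ^ (s-1)) (Set.Ioi (1:ℝ)) :=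
    (Real.GammaIntegral_convergent hs).mono_set (Set.Ioi_subset_Ioi zero_le_one)
  rw [← integrable_indicator_iff measurableSet_Ioi] at h1 ⊢
  have := h1.comp_add_right 1
  apply this.congr
  filter_upwards with x
  by_cases hx : x ∈ Set.Ioi (0:ℝ)
  · rw [Set.indicator_of_mem hx]
    show (Set.Ioi (1:ℝ)).indicator (fun h => Real.exp (-h) * h ^ (s-1)) (x+1) = _
    rw [Set.indicator_of_mem (by simpa using hx)]
  · rw [Set.indicator_of_notMem hx, Set.indicator_of_notMem (by simpa using hx)]

lemma gamma_le_tail' (s : ℝ) (hs : 1 ≤ s) :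
    Real.Gamma s ≤ Real.exp 1 * ∫ h in Set.Ioi (1:ℝ), Real.exp (-h) * h ^ (s-1) := by
  have hs0 : 0 < s := lt_of_lt_of_le one_pos hs
  rw [tail_shift', Real.Gamma_eq_integral hs0]
  rw [← integral_const_mul]
  apply integral_mono_of_nonneg
  · filter_upwards [ae_restrict_mem measurableSet_Ioi] with u hu
    exact mul_nonneg (Real.exp_nonneg _) (Real.rpow_nonneg (le_of_lt hu) _)
  · exact (shift_integrable' s hs0).const_mul _
  · filter_upwards [ae_restrict_mem measurableSet_Ioi] with u hu
    have hu0 : (0:ℝ) < u := hu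
    have h1 : Real.exp 1 * (Real.exp (-(u+1)) * (u+1) ^ (s-1)) =
        Real.exp (-u) * (u+1) ^ (s-1) := by
      rw [← mul_assoc, ← Real.exp_add]; ring_nf
    rw [h1]
    apply mul_le_mul_of_nonneg_left _ (Real.exp_nonneg _)
    exact Real.rpow_le_rpow hu0.le (by linarith) (by linarith)

lemma rpow_ratio' (a b : ℝ) (ha : 0 ≤ a) (hb : 0 < b) (p : ℝ) :
    a ^ p * b ^ (-p) = (a / b) ^ p := by
  rw [Real.rpow_neg hb.le, Real.div_rpow ha hb.le, div_eq_mul_inv]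

set_option maxHeartbeats 2000000 in
/-- Two-sided bounds on the CH spectral density: for α > d/2+1 and β² bounded by M,
c·(Γ(α-d/2)/Γ(α))β^d ≤ (1+‖λ‖²)^{v+d/2} m_CH^{α,β}(λ) ≤ C·Γ(α+v)/(Γ(α)β^{2v}),
with c, C independent of α, β, λ. -/
theorem stmt_15 (d : ℕ) (hd : 1 ≤ d) (v σ2 M : ℝ)
    (hv : 0 < v) (hσ : 0 < σ2) (hM : 0 < M) :
    ∃ c C : ℝ, 0 < c ∧ c ≤ C ∧
      ∀ α β : ℝ, (d:ℝ)/2 + 1 < α → 0 < β → β ^ 2 ≤ M →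
        ∀ l : EuclideanSpace ℝ (Fin d),
          c * (Real.Gamma (α - (d:ℝ)/2) / Real.Gamma α) * β ^ (d:ℝ) ≤
              (1 + ‖l‖ ^ 2) ^ (v + (d:ℝ)/2) *
                ((σ2 * (4*v) ^ v * β ^ (-(2*v)) / (Real.pi ^ ((d:ℝ)/2) * Real.Gamma α)) *
                  ∫ h in Set.Ioi (0:ℝ),
                    (4*v*h / β ^ 2 + ‖l‖ ^ 2) ^ (-(v + (d:ℝ)/2)) * h ^ (v + α - 1) *
                      Real.exp (-h)) ∧
            (1 + ‖l‖ ^ 2) ^ (v + (d:ℝ)/2) *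
                ((σ2 * (4*v) ^ v * β ^ (-(2*v)) / (Real.pi ^ ((d:ℝ)/2) * Real.Gamma α)) *
                  ∫ h in Set.Ioi (0:ℝ),
                    (4*v*h / β ^ 2 + ‖l‖ ^ 2) ^ (-(v + (d:ℝ)/2)) * h ^ (v + α - 1) *
                      Real.exp (-h))
              ≤ C * (Real.Gamma (α + v) / (Real.Gamma α * β ^ (2*v))) := by
  set p : ℝ := v + (d:ℝ)/2 with hpdef
  have hdR : (1:ℝ) ≤ (d:ℝ) := by exact_mod_cast hd
  have hp : 0 < p := by positivity
  have hpi : (0:ℝ) < Real.pi ^ ((d:ℝ)/2) := Real.rpow_pos_of_pos Real.pi_pos _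
  set K : ℝ := max M (4*v) with hKdef
  have hK : 0 < K := lt_max_of_lt_left hM
  have hMK : M ≤ K := le_max_left _ _
  have h4vK : 4*v ≤ K := le_max_right _ _
  set c₀ : ℝ := σ2 * (4*v) ^ v / (Real.exp 1 * (2*K) ^ p * Real.pi ^ ((d:ℝ)/2)) with hc₀
  set C₀ : ℝ := σ2 * (4*v) ^ v * ((2*K) ^ p / (4*v) ^ p) * (Real.exp 1 + 1) /
      Real.pi ^ ((d:ℝ)/2) with hC₀
  have hc₀pos : 0 < c₀ := by
    apply div_pos (by positivity)
    positivity
  have hC₀pos : 0 < C₀ := by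
    apply div_pos _ hpi
    have h1 : (0:ℝ) < (2*K) ^ p := Real.rpow_pos_of_pos (by linarith) _
    have h2 : (0:ℝ) < (4*v) ^ p := Real.rpow_pos_of_pos (by linarith) _
    have h3 : (0:ℝ) < (4*v) ^ v := Real.rpow_pos_of_pos (by linarith) _
    have := Real.exp_pos (1:ℝ)
    positivity
  refine ⟨min c₀ C₀, max c₀ C₀, lt_min hc₀pos hC₀pos, (min_le_left _ _).trans (le_max_left _ _),
    ?_⟩
  intro α β hα hβ hβM l
  set x : ℝ := ‖l‖ ^ 2 with hxdef
  have hx : 0 ≤ x := by positivity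
  have hβ2 : (0:ℝ) < β ^ 2 := by positivity
  set s₁ : ℝ := α - (d:ℝ)/2 with hs₁def
  set s₂ : ℝ := α + v with hs₂def
  have hs₁ : 1 < s₁ := by simp only [hs₁def]; linarith
  have hs₁0 : 0 < s₁ := by linarith
  have hs₂0 : 0 < s₂ := by simp only [hs₂def]; linarith
  have hs₁₂ : s₁ ≤ s₂ := by simp only [hs₁def, hs₂def]; linarith
  have hΓα : 0 < Real.Gamma α := Real.Gamma_pos_of_pos (by linarith)
  have hΓs₁ : 0 < Real.Gamma s₁ := Real.Gamma_pos_of_pos hs₁0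
  have hΓs₂ : 0 < Real.Gamma s₂ := Real.Gamma_pos_of_pos hs₂0
  set f : ℝ → ℝ := fun h => (4*v*h / β ^ 2 + x) ^ (-p) * h ^ (v + α - 1) * Real.exp (-h)
    with hfdef
  -- measurability
  have hf_meas : AEStronglyMeasurable f (volume.restrict (Set.Ioi 0)) := by
    apply ContinuousOn.aestronglyMeasurable _ measurableSet_Ioi
    apply ContinuousOn.mul
    apply ContinuousOn.mul
    · apply ContinuousOn.rpow_const
      · fun_prop
      · intro h hh
        left
        have hh0 : (0:ℝ) < h := hh
        positivity
    · apply ContinuousOn.rpow_const continuousOn_id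
      intro h hh
      exact Or.inl (ne_of_gt hh)
    · fun_prop
  -- pointwise domination
  have hdom : ∀ h ∈ Set.Ioi (0:ℝ), f h ≤ (4*v/β^2) ^ (-p) * (Real.exp (-h) * h ^ (s₁ - 1)) := by
    intro h hh
    have hh0 : (0:ℝ) < h := hh
    have hT : (0:ℝ) < 4*v*h/β^2 := by positivity
    have h1 : (4*v*h / β ^ 2 + x) ^ (-p) ≤ (4*v*h/β^2) ^ (-p) :=
      Real.rpow_le_rpow_of_nonpos hT (by linarith) (by linarith)
    have h2 : (4*v*h/β^2) ^ (-p) = (4*v/β^2) ^ (-p) * h ^ (-p) := by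
      rw [show 4*v*h/β^2 = (4*v/β^2) * h by ring, Real.mul_rpow (by positivity) hh0.le]
    have h3 : h ^ (-p) * h ^ (v + α - 1) = h ^ (s₁ - 1) := by
      rw [← Real.rpow_add hh0]
      congr 1
      simp only [hs₁def, hpdef]; ring
    calc f h ≤ (4*v/β^2) ^ (-p) * h ^ (-p) * h ^ (v + α - 1) * Real.exp (-h) := by
          rw [← h2]
          exact mul_le_mul_of_nonneg_right (mul_le_mul_of_nonneg_right h1
            (Real.rpow_nonneg hh0.le _)) (Real.exp_nonneg _)
      _ = (4*v/β^2) ^ (-p) * (Real.exp (-h) * h ^ (s₁ - 1)) := by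
          rw [mul_assoc ((4*v/β^2) ^ (-p)), h3]; ring
  have hf_nonneg : ∀ h ∈ Set.Ioi (0:ℝ), 0 ≤ f h := by
    intro h hh
    have hh0 : (0:ℝ) < h := hh
    have hT : (0:ℝ) < 4*v*h/β^2 + x := by positivity
    exact mul_nonneg (mul_nonneg (Real.rpow_nonneg hT.le _) (Real.rpow_nonneg hh0.le _))
      (Real.exp_nonneg _)
  have hconv₁ : IntegrableOn (fun h : ℝ => Real.exp (-h) * h ^ (s₁ - 1)) (Set.Ioi 0) :=
    Real.GammaIntegral_convergent hs₁0
  have hconv₂ : IntegrableOn (fun h : ℝ => Real.exp (-h) * h ^ (s₂ - 1)) (Set.Ioi 0) :=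
    Real.GammaIntegral_convergent hs₂0
  have hf_int : IntegrableOn f (Set.Ioi 0) := by
    apply Integrable.mono' (hconv₁.const_mul ((4*v/β^2) ^ (-p)))
      hf_meas
    filter_upwards [ae_restrict_mem measurableSet_Ioi] with h hh
    rw [Real.norm_eq_abs, abs_of_nonneg (hf_nonneg h hh)]
    exact hdom h hh
  have hsub : Set.Ioi (1:ℝ) ⊆ Set.Ioi (0:ℝ) := Set.Ioi_subset_Ioi zero_le_one
  set I : ℝ := ∫ h in Set.Ioi (0:ℝ), f h with hIdef
  -- pointwise upper bound
  have hU1 : ∀ h ∈ Set.Ioi (0:ℝ), (1+x) ^ p * f h ≤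
      ((2*K) ^ p / (4*v) ^ p) * (Real.exp (-h) * h ^ (s₁-1) + Real.exp (-h) * h ^ (s₂-1)) := by
    intro h hh
    have hh0 : (0:ℝ) < h := hh
    have hT : (0:ℝ) < 4*v*h/β^2 := by positivity
    have hTx : (0:ℝ) < 4*v*h/β^2 + x := by positivity
    have e1 : (1+x) ^ p * f h =
        ((1+x)/(4*v*h/β^2 + x)) ^ p * (h ^ (v+α-1) * Real.exp (-h)) := by
      rw [← rpow_ratio' _ _ (by positivity) hTx]
      simp only [hfdef]; ring
    have ratio_le : (1+x)/(4*v*h/β^2+x) ≤ K*(1+h)/(4*v*h) := by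
      rw [div_le_div_iff₀ hTx (by positivity)]
      have hc : 4*v*h/β^2*β^2 = 4*v*h := by field_simp
      have key : (1+x) * (4*v*h) * β^2 ≤ K*(1+h)*(4*v*h/β^2+x) * β^2 := by
        have expand : K*(1+h)*(4*v*h/β^2+x)*β^2 = K*(1+h)*(4*v*h + x*β^2) := by
          field_simp
        rw [expand]
        have t1 : 4*v*h*β^2 ≤ 4*v*h*K :=
          mul_le_mul_of_nonneg_left (le_trans hβM hMK) (by positivity)
        have t2 : (4*v)*(h*x*β^2) ≤ K*(h*x*β^2) :=
          mul_le_mul_of_nonneg_right h4vK (by positivity)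
        have t3 : (0:ℝ) ≤ K*x*β^2 := by positivity
        have t4 : (0:ℝ) ≤ K*(4*v)*h*h := by positivity
        nlinarith [t1, t2, t3, t4]
      exact le_of_mul_le_mul_right key hβ2
    have step1 : ((1+x)/(4*v*h/β^2+x)) ^ p ≤ (K*(1+h)/(4*v*h)) ^ p :=
      Real.rpow_le_rpow (by positivity) ratio_le hp.le
    have step2 : (K*(1+h)/(4*v*h)) ^ p ≤ ((2*K) ^ p/(4*v) ^ p) * (h ^ (-p) + 1) := by
      have e2 : K*(1+h)/(4*v*h) = (K/(4*v)) * ((1+h)/h) := by field_simp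
      rw [e2, Real.mul_rpow (by positivity) (by positivity)]
      have hnp : (0:ℝ) ≤ h ^ (-p) := Real.rpow_nonneg hh0.le _
      have claim : ((1+h)/h) ^ p ≤ 2 ^ p * (h ^ (-p) + 1) := by
        rcases le_total h 1 with h1 | h1
        · have hle : (1+h)/h ≤ 2/h :=
            (div_le_div_iff_of_pos_right hh0).2 (by linarith)
          have : ((1+h)/h) ^ p ≤ (2/h) ^ p :=
            Real.rpow_le_rpow (by positivity) hle hp.le
          have e3 : (2/h) ^ p = 2 ^ p * h ^ (-p) := by
            rw [Real.div_rpow (by norm_num) hh0.le, Real.rpow_neg hh0.le, div_eq_mul_inv]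
          have h2p : (0:ℝ) ≤ (2:ℝ) ^ p := Real.rpow_nonneg (by norm_num) _
          nlinarith
        · have hle : (1+h)/h ≤ 2 := by
            rw [div_le_iff₀ hh0]; linarith
          have : ((1+h)/h) ^ p ≤ 2 ^ p :=
            Real.rpow_le_rpow (by positivity) hle hp.le
          have h2p : (0:ℝ) ≤ (2:ℝ) ^ p := Real.rpow_nonneg (by norm_num) _
          nlinarith
      calc (K/(4*v)) ^ p * ((1+h)/h) ^ p ≤ (K/(4*v)) ^ p * (2 ^ p * (h ^ (-p) + 1)) :=
            mul_le_mul_of_nonneg_left claim (Real.rpow_nonneg (by positivity) _)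
        _ = ((2*K) ^ p/(4*v) ^ p) * (h ^ (-p) + 1) := by
            rw [Real.div_rpow hK.le (by positivity), Real.mul_rpow (by norm_num) hK.le]
            ring
    have step3 : (h ^ (-p) + 1) * (h ^ (v+α-1) * Real.exp (-h)) =
        Real.exp (-h) * h ^ (s₁-1) + Real.exp (-h) * h ^ (s₂-1) := by
      have h3 : h ^ (-p) * h ^ (v + α - 1) = h ^ (s₁ - 1) := by
        rw [← Real.rpow_add hh0]
        congr 1
        simp only [hs₁def, hpdef]; ring
      have h4 : h ^ (v + α - 1) = h ^ (s₂ - 1) := by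
        congr 1
        simp only [hs₂def]; ring
      calc (h ^ (-p) + 1) * (h ^ (v+α-1) * Real.exp (-h))
          = h ^ (-p) * h ^ (v+α-1) * Real.exp (-h) + h ^ (v+α-1) * Real.exp (-h) := by ring
        _ = Real.exp (-h) * h ^ (s₁-1) + Real.exp (-h) * h ^ (s₂-1) := by
            rw [h3, h4]; ring
    calc (1+x) ^ p * f h
        = ((1+x)/(4*v*h/β^2 + x)) ^ p * (h ^ (v+α-1) * Real.exp (-h)) := e1
      _ ≤ ((2*K) ^ p/(4*v) ^ p) * (h ^ (-p) + 1) * (h ^ (v+α-1) * Real.exp (-h)) := by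
          apply mul_le_mul_of_nonneg_right (step1.trans step2)
          exact mul_nonneg (Real.rpow_nonneg hh0.le _) (Real.exp_nonneg _)
      _ = ((2*K) ^ p / (4*v) ^ p) *
            (Real.exp (-h) * h ^ (s₁-1) + Real.exp (-h) * h ^ (s₂-1)) := by
          rw [mul_assoc, step3]
  -- integral-level upper bound
  have hI_upper : (1+x) ^ p * I ≤
      ((2*K) ^ p / (4*v) ^ p) * (Real.Gamma s₁ + Real.Gamma s₂) := by
    have h1 : (1+x) ^ p * I = ∫ h in Set.Ioi (0:ℝ), (1+x) ^ p * f h := by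
      rw [integral_const_mul]
    rw [h1]
    have h2 : (∫ h in Set.Ioi (0:ℝ), (1+x) ^ p * f h) ≤
        ∫ h in Set.Ioi (0:ℝ), ((2*K) ^ p / (4*v) ^ p) *
          (Real.exp (-h) * h ^ (s₁-1) + Real.exp (-h) * h ^ (s₂-1)) := by
      apply integral_mono_of_nonneg
      · filter_upwards [ae_restrict_mem measurableSet_Ioi] with h hh
        exact mul_nonneg (Real.rpow_nonneg (by positivity) _) (hf_nonneg h hh)
      · exact (hconv₁.add hconv₂).const_mul _
      · filter_upwards [ae_restrict_mem measurableSet_Ioi] with h hh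
        exact hU1 h hh
    refine h2.trans (le_of_eq ?_)
    rw [integral_const_mul, integral_add hconv₁ hconv₂,
      ← Real.Gamma_eq_integral hs₁0, ← Real.Gamma_eq_integral hs₂0]
  -- Gamma comparison
  have hΓ₁₂ : Real.Gamma s₁ ≤ Real.exp 1 * Real.Gamma s₂ := by
    calc Real.Gamma s₁ ≤ Real.exp 1 * ∫ h in Set.Ioi (1:ℝ), Real.exp (-h) * h ^ (s₁-1) :=
          gamma_le_tail' s₁ hs₁.le
      _ ≤ Real.exp 1 * ∫ h in Set.Ioi (1:ℝ), Real.exp (-h) * h ^ (s₂-1) := by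
          apply mul_le_mul_of_nonneg_left _ (Real.exp_nonneg _)
          apply setIntegral_mono_on (hconv₁.mono_set hsub) (hconv₂.mono_set hsub)
            measurableSet_Ioi
          intro h hh
          have hh1 : (1:ℝ) < h := hh
          exact mul_le_mul_of_nonneg_left
            (Real.rpow_le_rpow_of_exponent_le hh1.le (by linarith)) (Real.exp_nonneg _)
      _ ≤ Real.exp 1 * Real.Gamma s₂ := by
          apply mul_le_mul_of_nonneg_left _ (Real.exp_nonneg _)
          rw [Real.Gamma_eq_integral hs₂0]
          apply setIntegral_mono_set hconv₂ _ (HasSubset.Subset.eventuallyLE hsub)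
          filter_upwards [ae_restrict_mem measurableSet_Ioi] with h hh
          have hh0 : (0:ℝ) < h := hh
          exact mul_nonneg (Real.exp_nonneg _) (Real.rpow_nonneg hh0.le _)
  -- pointwise lower bound on Ioi 1
  have hL1 : ∀ h ∈ Set.Ioi (1:ℝ),
      (β^2/(2*K)) ^ p * (Real.exp (-h) * h ^ (s₁-1)) ≤ (1+x) ^ p * f h := by
    intro h hh
    have hh1 : (1:ℝ) < h := hh
    have hh0 : (0:ℝ) < h := lt_trans one_pos hh1
    have hT : (0:ℝ) < 4*v*h/β^2 := by positivity
    have hTx : (0:ℝ) < 4*v*h/β^2 + x := by positivity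
    have e1 : (1+x) ^ p * f h =
        ((1+x)/(4*v*h/β^2 + x)) ^ p * (h ^ (v+α-1) * Real.exp (-h)) := by
      rw [← rpow_ratio' _ _ (by positivity) hTx]
      simp only [hfdef]; ring
    have ratio_ge : β^2/(2*K*h) ≤ (1+x)/(4*v*h/β^2+x) := by
      rw [div_le_div_iff₀ (by positivity) hTx]
      have hc : β^2 * (4*v*h/β^2) = 4*v*h := by field_simp
      have expand : β^2*(4*v*h/β^2+x) = 4*v*h + β^2*x := by
        field_simp
      rw [expand]
      have t1 : 4*v*h ≤ K*h := by
        apply mul_le_mul_of_nonneg_right h4vK hh0.le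
      have t2 : β^2*x ≤ K*x := mul_le_mul_of_nonneg_right (le_trans hβM hMK) hx
      have t3 : K*x ≤ K*x*h := by nlinarith [mul_nonneg hK.le hx]
      have t4 : (0:ℝ) ≤ 2*K*h*x := by positivity
      nlinarith [mul_pos hK hh0]
    have step1 : (β^2/(2*K*h)) ^ p ≤ ((1+x)/(4*v*h/β^2+x)) ^ p :=
      Real.rpow_le_rpow (by positivity) ratio_ge hp.le
    have step2 : (β^2/(2*K*h)) ^ p = (β^2/(2*K)) ^ p * h ^ (-p) := by
      rw [show β^2/(2*K*h) = (β^2/(2*K))/h by rw [div_div],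
        Real.div_rpow (by positivity) hh0.le, Real.rpow_neg hh0.le, div_eq_mul_inv]
    have step3 : h ^ (-p) * (h ^ (v+α-1) * Real.exp (-h)) = Real.exp (-h) * h ^ (s₁-1) := by
      rw [← mul_assoc, ← Real.rpow_add hh0]
      rw [show -p + (v+α-1) = s₁ - 1 by simp only [hs₁def, hpdef]; ring]
      ring
    calc (β^2/(2*K)) ^ p * (Real.exp (-h) * h ^ (s₁-1))
        = (β^2/(2*K*h)) ^ p * (h ^ (v+α-1) * Real.exp (-h)) := by
          rw [step2, mul_assoc, step3]
      _ ≤ ((1+x)/(4*v*h/β^2+x)) ^ p * (h ^ (v+α-1) * Real.exp (-h)) := by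
          apply mul_le_mul_of_nonneg_right step1
          exact mul_nonneg (Real.rpow_nonneg hh0.le _) (Real.exp_nonneg _)
      _ = (1+x) ^ p * f h := e1.symm
  -- integral-level lower bound
  have hI_lower : (β^2/(2*K)) ^ p * (Real.Gamma s₁ / Real.exp 1) ≤ (1+x) ^ p * I := by
    have ha : Real.Gamma s₁ / Real.exp 1 ≤ ∫ h in Set.Ioi (1:ℝ), Real.exp (-h) * h ^ (s₁-1) := by
      rw [div_le_iff₀ (Real.exp_pos 1)]
      rw [mul_comm]
      exact gamma_le_tail' s₁ hs₁.le
    have hb : (β^2/(2*K)) ^ p * ∫ h in Set.Ioi (1:ℝ), Real.exp (-h) * h ^ (s₁-1) ≤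
        ∫ h in Set.Ioi (1:ℝ), (1+x) ^ p * f h := by
      rw [← integral_const_mul]
      apply setIntegral_mono_on ((hconv₁.mono_set hsub).const_mul _)
        ((hf_int.mono_set hsub).const_mul _) measurableSet_Ioi
      intro h hh
      exact hL1 h hh
    have hc : (∫ h in Set.Ioi (1:ℝ), (1+x) ^ p * f h) ≤ (1+x) ^ p * I := by
      rw [← integral_const_mul]
      apply setIntegral_mono_set (hf_int.const_mul _)
      · filter_upwards [ae_restrict_mem measurableSet_Ioi] with h hh
        exact mul_nonneg (Real.rpow_nonneg (by positivity) _) (hf_nonneg h hh)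
      · exact HasSubset.Subset.eventuallyLE hsub
    calc (β^2/(2*K)) ^ p * (Real.Gamma s₁ / Real.exp 1)
        ≤ (β^2/(2*K)) ^ p * ∫ h in Set.Ioi (1:ℝ), Real.exp (-h) * h ^ (s₁-1) :=
          mul_le_mul_of_nonneg_left ha (Real.rpow_nonneg (by positivity) _)
      _ ≤ ∫ h in Set.Ioi (1:ℝ), (1+x) ^ p * f h := hb
      _ ≤ (1+x) ^ p * I := hc
  -- final assembly
  have h4v : (0:ℝ) < 4*v := by linarith
  have hβ2v : (0:ℝ) < β ^ (2*v) := Real.rpow_pos_of_pos hβ _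
  have hβneg : β ^ (-(2*v)) = (β ^ (2*v))⁻¹ := Real.rpow_neg hβ.le _
  have hbp : ((β^2 : ℝ)) ^ p = β ^ (2*v) * β ^ (d:ℝ) := by
    rw [← Real.rpow_two β, ← Real.rpow_mul hβ.le]
    rw [show (2:ℝ)*p = 2*v + (d:ℝ) by simp only [hpdef]; ring, Real.rpow_add hβ]
  have h2Kp : (0:ℝ) < (2*K) ^ p := Real.rpow_pos_of_pos (by linarith) _
  have h4vp : (0:ℝ) < (4*v) ^ p := Real.rpow_pos_of_pos h4v _
  have h4vv : (0:ℝ) < (4*v) ^ v := Real.rpow_pos_of_pos h4v _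
  have hβnegpos : (0:ℝ) < β ^ (-(2*v)) := Real.rpow_pos_of_pos hβ _
  have hpref : (0:ℝ) ≤ σ2 * (4*v) ^ v * β ^ (-(2*v)) / (Real.pi ^ ((d:ℝ)/2) * Real.Gamma α) :=
    le_of_lt (div_pos (mul_pos (mul_pos hσ h4vv) hβnegpos) (mul_pos hpi hΓα))
  have hβd : (0:ℝ) < β ^ (d:ℝ) := Real.rpow_pos_of_pos hβ _
  have h1x : (0:ℝ) ≤ (1+x) ^ p := Real.rpow_nonneg (by positivity) _
  constructor
  · calc min c₀ C₀ * (Real.Gamma s₁ / Real.Gamma α) * β ^ (d:ℝ)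
        ≤ c₀ * (Real.Gamma s₁ / Real.Gamma α) * β ^ (d:ℝ) := by
          apply mul_le_mul_of_nonneg_right _ hβd.le
          exact mul_le_mul_of_nonneg_right (min_le_left _ _) (by positivity)
      _ = (σ2 * (4*v) ^ v * β ^ (-(2*v)) / (Real.pi ^ ((d:ℝ)/2) * Real.Gamma α)) *
            ((β^2/(2*K)) ^ p * (Real.Gamma s₁ / Real.exp 1)) := by
          rw [hβneg, hc₀, Real.div_rpow hβ2.le (by linarith), hbp]
          field_simp
      _ ≤ (σ2 * (4*v) ^ v * β ^ (-(2*v)) / (Real.pi ^ ((d:ℝ)/2) * Real.Gamma α)) *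
            ((1+x) ^ p * I) := mul_le_mul_of_nonneg_left hI_lower hpref
      _ = (1+x) ^ p *
            ((σ2 * (4*v) ^ v * β ^ (-(2*v)) / (Real.pi ^ ((d:ℝ)/2) * Real.Gamma α)) * I) := by
          ring
  · calc (1+x) ^ p *
            ((σ2 * (4*v) ^ v * β ^ (-(2*v)) / (Real.pi ^ ((d:ℝ)/2) * Real.Gamma α)) * I)
        = (σ2 * (4*v) ^ v * β ^ (-(2*v)) / (Real.pi ^ ((d:ℝ)/2) * Real.Gamma α)) *
            ((1+x) ^ p * I) := by ring
      _ ≤ (σ2 * (4*v) ^ v * β ^ (-(2*v)) / (Real.pi ^ ((d:ℝ)/2) * Real.Gamma α)) *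
            (((2*K) ^ p / (4*v) ^ p) * (Real.Gamma s₁ + Real.Gamma s₂)) :=
          mul_le_mul_of_nonneg_left hI_upper hpref
      _ ≤ (σ2 * (4*v) ^ v * β ^ (-(2*v)) / (Real.pi ^ ((d:ℝ)/2) * Real.Gamma α)) *
            (((2*K) ^ p / (4*v) ^ p) * ((Real.exp 1 + 1) * Real.Gamma s₂)) := by
          apply mul_le_mul_of_nonneg_left _ hpref
          apply mul_le_mul_of_nonneg_left _ (le_of_lt (div_pos h2Kp h4vp))
          nlinarith [hΓ₁₂]
      _ = C₀ * (Real.Gamma s₂ / (Real.Gamma α * β ^ (2*v))) := by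
          rw [hβneg, hC₀]
          field_simp
      _ ≤ max c₀ C₀ * (Real.Gamma s₂ / (Real.Gamma α * β ^ (2*v))) := by
          apply mul_le_mul_of_nonneg_right (le_max_right _ _)
          positivity
end

section
/- Let v > 0, d ≥ 1, α > d/2+1, β > 0. For all λ ∈ ℝ^d with ‖λ‖²β² ≥ α+v−1, the CH spectral density satisfies (1+‖λ‖²)^{v+d/2} m_{CH}^{α,β}(λ) ≥ c · β^{-2v} Γ(α+v)/Γ(α) for a constant c > 0 independent of α, β, λ. -/
open Real MeasureTheory
open Set in
lemma trunc_gamma (s T : ℝ) (hs : 0 < s) (hT : 2*s ≤ T) :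
    Real.Gamma s / 2 ≤ ∫ h in Set.Ioc (0:ℝ) T, Real.exp (-h) * h ^ (s-1) := by
  have hT0 : 0 < T := lt_of_lt_of_le (by positivity) hT
  have hint : IntegrableOn (fun h => Real.exp (-h) * h ^ (s-1)) (Ioi 0) :=
    Real.GammaIntegral_convergent hs
  have hint1 : IntegrableOn (fun h => Real.exp (-h) * h ^ (s+1-1)) (Ioi 0) :=
    Real.GammaIntegral_convergent (by linarith)
  have hsplit : (∫ h in Set.Ioi (0:ℝ), Real.exp (-h) * h ^ (s-1))
      = (∫ h in Set.Ioc (0:ℝ) T, Real.exp (-h) * h ^ (s-1))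
        + ∫ h in Set.Ioi T, Real.exp (-h) * h ^ (s-1) := by
    rw [← Set.Ioc_union_Ioi_eq_Ioi hT0.le]
    exact setIntegral_union (Set.Ioc_disjoint_Ioi le_rfl) measurableSet_Ioi
      (hint.mono_set Set.Ioc_subset_Ioi_self) (hint.mono_set (Set.Ioi_subset_Ioi hT0.le))
  have htail : (∫ h in Set.Ioi T, Real.exp (-h) * h ^ (s-1)) ≤ Real.Gamma s / 2 := by
    have h1 : (∫ h in Set.Ioi T, Real.exp (-h) * h ^ (s-1))
        ≤ ∫ h in Set.Ioi T, (1/T) * (Real.exp (-h) * h ^ (s+1-1)) := by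
      refine setIntegral_mono_on (hint.mono_set (Set.Ioi_subset_Ioi hT0.le))
        ((hint1.mono_set (Set.Ioi_subset_Ioi hT0.le)).const_mul _) measurableSet_Ioi ?_
      intro x hx
      have hx0 : 0 < x := lt_trans hT0 hx
      have hxe : x ^ (s+1-1) = x ^ (s-1) * x := by
        rw [show s+1-1 = (s-1)+1 by ring, Real.rpow_add hx0, Real.rpow_one]
      rw [hxe, one_div, le_inv_mul_iff₀ hT0]
      nlinarith [mul_le_mul_of_nonneg_left (le_of_lt (Set.mem_Ioi.mp hx))
        (le_of_lt (mul_pos (Real.exp_pos (-x)) (Real.rpow_pos_of_pos hx0 (s-1))))]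
    have h2 : (∫ h in Set.Ioi T, (1/T) * (Real.exp (-h) * h ^ (s+1-1)))
        = (1/T) * ∫ h in Set.Ioi T, Real.exp (-h) * h ^ (s+1-1) := by
      exact integral_const_mul _ _
    have h3 : (∫ h in Set.Ioi T, Real.exp (-h) * h ^ (s+1-1))
        ≤ ∫ h in Set.Ioi (0:ℝ), Real.exp (-h) * h ^ (s+1-1) := by
      refine setIntegral_mono_set hint1 ?_ (HasSubset.Subset.eventuallyLE (Set.Ioi_subset_Ioi hT0.le))
      filter_upwards [ae_restrict_mem measurableSet_Ioi] with x hx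
      have : (0:ℝ) < x := hx
      positivity
    have h4 : (∫ h in Set.Ioi (0:ℝ), Real.exp (-h) * h ^ (s+1-1)) = Real.Gamma (s+1) :=
      (Real.Gamma_eq_integral (by linarith)).symm
    have h5 : Real.Gamma (s+1) = s * Real.Gamma s := Real.Gamma_add_one hs.ne'
    have hG : 0 < Real.Gamma s := Real.Gamma_pos_of_pos hs
    have h6 : (1/T) * (s * Real.Gamma s) ≤ Real.Gamma s / 2 := by
      rw [div_mul_eq_mul_div, div_le_div_iff₀ hT0 two_pos]
      nlinarith
    calc (∫ h in Set.Ioi T, Real.exp (-h) * h ^ (s-1))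
        ≤ (1/T) * ∫ h in Set.Ioi T, Real.exp (-h) * h ^ (s+1-1) := by rw [← h2]; exact h1
      _ ≤ (1/T) * (s * Real.Gamma s) := by
          apply mul_le_mul_of_nonneg_left _ (by positivity)
          rw [← h5, ← h4]; exact h3
      _ ≤ Real.Gamma s / 2 := h6
  have hGint : Real.Gamma s = ∫ h in Set.Ioi (0:ℝ), Real.exp (-h) * h ^ (s-1) :=
    Real.Gamma_eq_integral hs
  linarith [hsplit ▸ hGint]


set_option maxHeartbeats 2000000 in
/-- Tail lower bound for the CH spectral density: if ‖λ‖²β² ≥ α+v-1, then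
(1+‖λ‖²)^{v+d/2} m_CH^{α,β}(λ) ≥ c·β^{-2v}Γ(α+v)/Γ(α), with c independent of α, β, λ. -/
theorem stmt_16 (d : ℕ) (hd : 1 ≤ d) (v σ2 : ℝ) (hv : 0 < v) (hσ : 0 < σ2) :
    ∃ c : ℝ, 0 < c ∧
      ∀ α β : ℝ, (d:ℝ)/2 + 1 < α → 0 < β →
        ∀ l : EuclideanSpace ℝ (Fin d), α + v - 1 ≤ ‖l‖ ^ 2 * β ^ 2 →
          (1 + ‖l‖ ^ 2) ^ (v + (d:ℝ)/2) *
              ((σ2 * (4*v) ^ v * β ^ (-(2*v)) / (Real.pi ^ ((d:ℝ)/2) * Real.Gamma α)) *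
                ∫ h in Set.Ioi (0:ℝ),
                  (4*v*h / β ^ 2 + ‖l‖ ^ 2) ^ (-(v + (d:ℝ)/2)) * h ^ (v + α - 1) *
                    Real.exp (-h))
            ≥ c * β ^ (-(2*v)) * (Real.Gamma (α + v) / Real.Gamma α) := by
  obtain ⟨K, hK, hKprop⟩ : ∃ K : ℝ, 0 < K ∧ ∀ x : ℝ, 1 + 2*v ≤ 2*x → 2*(x+1) ≤ K*x := by
    have h12v' : (0:ℝ) < 1 + 2*v := by linarith
    refine ⟨2 + 4/(1+2*v), by positivity, ?_⟩
    intro x hx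
    have hx0 : (0:ℝ) ≤ x := by linarith
    have h2 : (2:ℝ) ≤ 4/(1+2*v) * x := by
      rw [div_mul_eq_mul_div, le_div_iff₀ h12v']; linarith
    have h3 : (2 + 4/(1+2*v)) * x = 2*x + 4/(1+2*v)*x := by ring
    linarith [h3.ge, h3.le]
  refine ⟨σ2 * (4*v) ^ v * (1+4*v*K) ^ (-(v+(d:ℝ)/2)) / (2 * Real.pi ^ ((d:ℝ)/2)), by positivity, ?_⟩
  intro α β hα hβ l hl
  have hd1 : (1:ℝ) ≤ d := by exact_mod_cast hd
  have hα0 : (0:ℝ) < α := by nlinarith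
  have hδ : (0:ℝ) < α + v - 1 := by nlinarith
  have hβ2 : (0:ℝ) < β^2 := by positivity
  have hl2 : (0:ℝ) < ‖l‖^2 := by nlinarith
  have h12v : (0:ℝ) < 1 + 2*v := by linarith
  set T : ℝ := K * (α + v - 1) with hTdef
  have hT0 : 0 < T := by positivity
  have hT2 : 2*(v+α) ≤ T := by
    have := hKprop (α+v-1) (by nlinarith)
    rw [hTdef]
    linarith
  set p : ℝ := v + (d:ℝ)/2 with hpdef
  have hp : 0 < p := by positivity
  set g : ℝ → ℝ := fun h => (4*v*h / β ^ 2 + ‖l‖ ^ 2) ^ (-p) * h ^ (v + α - 1) * Real.exp (-h)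
    with hgdef
  have hsva : (0:ℝ) < v + α := by linarith
  have hmeas : AEStronglyMeasurable g (volume.restrict (Set.Ioi 0)) := by
    have c1 : ContinuousOn (fun h : ℝ => (4*v*h / β ^ 2 + ‖l‖ ^ 2) ^ (-p)) (Set.Ioi 0) := by
      refine ContinuousOn.rpow_const (Continuous.continuousOn (by continuity)) ?_
      intro x hx
      have hx0 : (0:ℝ) < x := hx
      exact Or.inl (ne_of_gt (by positivity))
    have c2 : ContinuousOn (fun h : ℝ => h ^ (v + α - 1)) (Set.Ioi 0) := by
      refine ContinuousOn.rpow_const continuousOn_id ?_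
      intro x hx
      exact Or.inl (ne_of_gt hx)
    exact ((c1.mul c2).mul
      (Real.continuous_exp.comp continuous_neg).continuousOn).aestronglyMeasurable
      measurableSet_Ioi
  have hGint : IntegrableOn (fun h : ℝ => Real.exp (-h) * h ^ (v + α - 1)) (Set.Ioi 0) :=
    Real.GammaIntegral_convergent hsva
  have hgnonneg : ∀ h : ℝ, 0 < h → 0 ≤ g h := by
    intro h hh
    have hbase : 0 < 4*v*h / β ^ 2 + ‖l‖ ^ 2 := by positivity
    have := Real.rpow_pos_of_pos hbase (-p)
    have := Real.rpow_pos_of_pos hh (v+α-1)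
    positivity
  have hint : IntegrableOn g (Set.Ioi 0) := by
    apply Integrable.mono' (hGint.const_mul ((‖l‖^2) ^ (-p))) hmeas
    filter_upwards [ae_restrict_mem measurableSet_Ioi] with h hh
    have hh0 : (0:ℝ) < h := hh
    rw [Real.norm_eq_abs, abs_of_nonneg (hgnonneg h hh0)]
    have hbase : ‖l‖^2 ≤ 4*v*h / β ^ 2 + ‖l‖ ^ 2 :=
      le_add_of_nonneg_left (by positivity)
    have h1 : (4*v*h / β ^ 2 + ‖l‖ ^ 2) ^ (-p) ≤ (‖l‖^2) ^ (-p) :=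
      Real.rpow_le_rpow_of_nonpos hl2 hbase (by linarith)
    have h2 : (0:ℝ) ≤ h ^ (v+α-1) * Real.exp (-h) := by positivity
    calc (4*v*h / β ^ 2 + ‖l‖ ^ 2) ^ (-p) * h ^ (v + α - 1) * Real.exp (-h)
        = (4*v*h / β ^ 2 + ‖l‖ ^ 2) ^ (-p) * (h ^ (v + α - 1) * Real.exp (-h)) := by ring
      _ ≤ (‖l‖^2) ^ (-p) * (h ^ (v + α - 1) * Real.exp (-h)) :=
          mul_le_mul_of_nonneg_right h1 h2
      _ = (‖l‖^2) ^ (-p) * (Real.exp (-h) * h ^ (v + α - 1)) := by ring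
  set A : ℝ := (1 + ‖l‖^2) * (1 + 4*v*K) with hAdef
  have hA : 0 < A := by positivity
  have hptwise : ∀ h ∈ Set.Ioc (0:ℝ) T,
      A ^ (-p) * (Real.exp (-h) * h ^ (v + α - 1)) ≤ g h := by
    intro h hh
    have hh0 : 0 < h := hh.1
    have hhr : 4*v*h / β^2 ≤ 4*v*K*‖l‖^2 := by
      rw [div_le_iff₀ hβ2]
      nlinarith [mul_le_mul_of_nonneg_left hl (by positivity : (0:ℝ) ≤ 4*v*K),
        mul_le_mul_of_nonneg_left hh.2 (by positivity : (0:ℝ) ≤ 4*v)]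
    have hbaseA : 4*v*h / β ^ 2 + ‖l‖ ^ 2 ≤ A := by
      rw [hAdef]; nlinarith [mul_pos hv hK]
    have hbase0 : 0 < 4*v*h / β ^ 2 + ‖l‖ ^ 2 := by positivity
    have h1 : A ^ (-p) ≤ (4*v*h / β ^ 2 + ‖l‖ ^ 2) ^ (-p) :=
      Real.rpow_le_rpow_of_nonpos hbase0 hbaseA (by linarith)
    have h2 : (0:ℝ) ≤ Real.exp (-h) * h ^ (v+α-1) := by positivity
    calc A ^ (-p) * (Real.exp (-h) * h ^ (v + α - 1))
        ≤ (4*v*h / β ^ 2 + ‖l‖ ^ 2) ^ (-p) * (Real.exp (-h) * h ^ (v + α - 1)) :=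
          mul_le_mul_of_nonneg_right h1 h2
      _ = g h := by rw [hgdef]; ring
  have hIoc : A ^ (-p) * (Real.Gamma (v+α) / 2) ≤ ∫ h in Set.Ioc (0:ℝ) T, g h := by
    calc A ^ (-p) * (Real.Gamma (v+α) / 2)
        ≤ A ^ (-p) * ∫ h in Set.Ioc (0:ℝ) T, Real.exp (-h) * h ^ (v+α-1) :=
          mul_le_mul_of_nonneg_left (trunc_gamma (v+α) T hsva hT2)
            (le_of_lt (Real.rpow_pos_of_pos hA (-p)))
      _ = ∫ h in Set.Ioc (0:ℝ) T, A ^ (-p) * (Real.exp (-h) * h ^ (v+α-1)) :=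
          (integral_const_mul _ _).symm
      _ ≤ ∫ h in Set.Ioc (0:ℝ) T, g h := by
          refine setIntegral_mono_on
            ((hGint.mono_set Set.Ioc_subset_Ioi_self).const_mul _)
            (hint.mono_set Set.Ioc_subset_Ioi_self) measurableSet_Ioc hptwise
  have hIoi : (∫ h in Set.Ioc (0:ℝ) T, g h) ≤ ∫ h in Set.Ioi (0:ℝ), g h := by
    refine setIntegral_mono_set hint ?_
      (HasSubset.Subset.eventuallyLE Set.Ioc_subset_Ioi_self)
    filter_upwards [ae_restrict_mem measurableSet_Ioi] with h hh
    exact hgnonneg h hh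
  have hI : A ^ (-p) * (Real.Gamma (v+α) / 2) ≤ ∫ h in Set.Ioi (0:ℝ), g h :=
    le_trans hIoc hIoi
  have hGα : 0 < Real.Gamma α := Real.Gamma_pos_of_pos hα0
  have hGs : 0 < Real.Gamma (v+α) := Real.Gamma_pos_of_pos hsva
  have hπ : (0:ℝ) < Real.pi ^ ((d:ℝ)/2) := Real.rpow_pos_of_pos Real.pi_pos _
  have hC : (0:ℝ) < σ2 * (4*v) ^ v * β ^ (-(2*v)) / (Real.pi ^ ((d:ℝ)/2) * Real.Gamma α) := by
    have := Real.rpow_pos_of_pos (show (0:ℝ) < 4*v by linarith) v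
    have := Real.rpow_pos_of_pos hβ (-(2*v))
    positivity
  have hcancel : (1 + ‖l‖^2) ^ p * A ^ (-p) = (1 + 4*v*K) ^ (-p) := by
    rw [hAdef, Real.mul_rpow (by positivity) (by positivity), ← mul_assoc,
      ← Real.rpow_add (by positivity : (0:ℝ) < 1 + ‖l‖^2), add_neg_cancel,
      Real.rpow_zero, one_mul]
  rw [ge_iff_le]
  have hfinal :
      σ2 * (4*v) ^ v * (1+4*v*K) ^ (-p) / (2 * Real.pi ^ ((d:ℝ)/2)) * β ^ (-(2*v)) *
          (Real.Gamma (α + v) / Real.Gamma α)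
        = (1 + ‖l‖ ^ 2) ^ p *
            ((σ2 * (4*v) ^ v * β ^ (-(2*v)) / (Real.pi ^ ((d:ℝ)/2) * Real.Gamma α)) *
              (A ^ (-p) * (Real.Gamma (v+α) / 2))) := by
    rw [show α + v = v + α from add_comm α v]
    rw [show (1 + ‖l‖ ^ 2) ^ p *
            ((σ2 * (4*v) ^ v * β ^ (-(2*v)) / (Real.pi ^ ((d:ℝ)/2) * Real.Gamma α)) *
              (A ^ (-p) * (Real.Gamma (v+α) / 2)))
        = ((1 + ‖l‖^2) ^ p * A ^ (-p)) *
            ((σ2 * (4*v) ^ v * β ^ (-(2*v)) / (Real.pi ^ ((d:ℝ)/2) * Real.Gamma α)) *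
              (Real.Gamma (v+α) / 2)) from by ring, hcancel]
    field_simp
  calc σ2 * (4*v) ^ v * (1+4*v*K) ^ (-p) / (2 * Real.pi ^ ((d:ℝ)/2)) * β ^ (-(2*v)) *
          (Real.Gamma (α + v) / Real.Gamma α)
      = (1 + ‖l‖ ^ 2) ^ p *
          ((σ2 * (4*v) ^ v * β ^ (-(2*v)) / (Real.pi ^ ((d:ℝ)/2) * Real.Gamma α)) *
            (A ^ (-p) * (Real.Gamma (v+α) / 2))) := hfinal
    _ ≤ (1 + ‖l‖ ^ 2) ^ p *
          ((σ2 * (4*v) ^ v * β ^ (-(2*v)) / (Real.pi ^ ((d:ℝ)/2) * Real.Gamma α)) *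
            ∫ h in Set.Ioi (0:ℝ), g h) := by
        refine mul_le_mul_of_nonneg_left (mul_le_mul_of_nonneg_left hI (le_of_lt hC)) ?_
        positivity
end
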